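/- Let Γ be a finitely generated abelian group, 𝒜 a finite list of elements in Γ, and G a finite abelian group. Then the cardinality of the complement M(𝒜; Γ, G) = Hom(Γ, G) \ ⋃_{α∈𝒜} H_{α,G} equals χ_𝒜^G(#G) = Σ_{𝒮⊂𝒜} (−1)^{#𝒮} · m(𝒮; G) · (#G)^{r_Γ − r_𝒮}, where the sum is over all sublists 𝒮 of 𝒜. -/

import Mathlib

/-- The rank of the subgroup generated by a subset `X` of an abelian group `Γ`. -/
noncomputable def rk (Γ : Type*) [AddCommGroup Γ] (X : Set Γ) : ℕ :=
  Module.finrank ℤ (AddSubgroup.closure X)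

/-- The `G`-multiplicity `m(X; G) = #Hom((Γ/⟨X⟩)_tor, G)`. -/
noncomputable def mult (Γ : Type*) [AddCommGroup Γ] (G : Type*) [AddCommGroup G]
    (X : Set Γ) : ℕ :=
  Nat.card ((AddCommGroup.torsion (Γ ⧸ AddSubgroup.closure X)) →+ G)


section Helpers
variable {M N G : Type*} [AddCommGroup M] [AddCommGroup N] [AddCommGroup G]

/-- Precomposition with an `AddEquiv` as an equivalence of hom sets. -/
def homCongrLeft (e : M ≃+ N) : (M →+ G) ≃ (N →+ G) where
  toFun f := f.comp e.symm.toAddMonoidHom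
  invFun f := f.comp e.toAddMonoidHom
  left_inv f := by ext x; simp
  right_inv f := by ext x; simp

/-- An `AddEquiv` induces an equivalence of torsion subgroups. -/
def torsionCongr (e : M ≃+ N) :
    AddCommGroup.torsion M ≃+ AddCommGroup.torsion N where
  toFun x := ⟨e x, e.toAddMonoidHom.isOfFinAddOrder x.2⟩
  invFun y := ⟨e.symm y, e.symm.toAddMonoidHom.isOfFinAddOrder y.2⟩
  left_inv x := by ext; simp
  right_inv y := by ext; simp
  map_add' x y := by ext; simp

/-- finrank over ℤ is invariant under `AddEquiv`, for arbitrary module structures. -/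
lemma finrank_int_congr {M N : Type*} [AddCommGroup M] [AddCommGroup N]
    (I : Module ℤ M) (J : Module ℤ N) (e : M ≃+ N) :
    @Module.finrank ℤ M _ _ I = @Module.finrank ℤ N _ _ J := by
  haveI := AddCommGroup.uniqueIntModule (M := M)
  haveI := AddCommGroup.uniqueIntModule (M := N)
  obtain rfl : I = AddCommGroup.toIntModule M := Subsingleton.elim _ _
  obtain rfl : J = AddCommGroup.toIntModule N := Subsingleton.elim _ _
  exact e.toIntLinearEquiv.finrank_eq

/-- Homs out of a quotient correspond to homs vanishing on the subgroup. -/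
def quotHomEquiv (H : AddSubgroup M) : ((M ⧸ H) →+ G) ≃ {φ : M →+ G // ∀ x ∈ H, φ x = 0} where
  toFun ψ := ⟨ψ.comp (QuotientAddGroup.mk' H), fun x hx => by
    simp [(QuotientAddGroup.eq_zero_iff x).mpr hx]⟩
  invFun φ := QuotientAddGroup.lift H φ.1 φ.2
  left_inv ψ := by
    ext x
    rfl
  right_inv φ := by ext x; simp; rfl

end Helpers

section Counting
open Module

/-- The torsion of `F × D` is `D`, when `F` is torsion-free and `D` is torsion. -/
def torsionProdEquiv {F D : Type*} [AddCommGroup F] [AddCommGroup D]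
    (hF : ∀ x : F, IsOfFinAddOrder x → x = 0) (hD : ∀ d : D, IsOfFinAddOrder d) :
    AddCommGroup.torsion (F × D) ≃+ D where
  toFun x := x.1.2
  invFun d := ⟨(0, d), IsOfFinAddOrder.prod_mk (IsOfFinAddOrder.zero) (hD d)⟩
  left_inv x := by
    ext
    · exact (hF x.1.1 x.2.fst).symm
    · rfl
  right_inv d := rfl
  map_add' x y := rfl

/-- Splitting homs out of a product. -/
def prodHomEquiv (M N G : Type*) [AddCommMonoid M] [AddCommMonoid N] [AddCommMonoid G] :
    (M × N →+ G) ≃ (M →+ G) × (N →+ G) where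
  toFun g := (g.comp (AddMonoidHom.inl M N), g.comp (AddMonoidHom.inr M N))
  invFun gh := gh.1.comp (AddMonoidHom.fst M N) + gh.2.comp (AddMonoidHom.snd M N)
  left_inv g := by
    apply AddMonoidHom.ext
    rintro ⟨x, y⟩
    have h : (x, y) = ((x, 0) : M × N) + (0, y) := by simp
    rw [AddMonoidHom.add_apply]
    simp only [AddMonoidHom.coe_comp, Function.comp_apply, AddMonoidHom.coe_fst,
      AddMonoidHom.coe_snd, AddMonoidHom.inl_apply, AddMonoidHom.inr_apply]
    rw [h, map_add]
  right_inv gh := by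
    refine Prod.ext ?_ ?_ <;> apply AddMonoidHom.ext <;> intro x <;> simp

lemma card_hom_eq (Q G : Type*) [AddCommGroup Q] [AddGroup.FG Q]
    [AddCommGroup G] [Finite G] :
    Nat.card (Q →+ G) =
      Nat.card ((AddCommGroup.torsion Q) →+ G) * Nat.card G ^ Module.finrank ℤ Q := by
  classical
  obtain ⟨n, ι, fι, p, hp, e, ⟨f⟩⟩ := AddCommGroup.equiv_free_prod_directSum_zmod Q
  haveI : ∀ i, NeZero (p i ^ e i) := fun i => ⟨pow_ne_zero _ (hp i).ne_zero⟩
  set F := (Fin n →₀ ℤ) with hFdef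
  set D := (DirectSum ι fun i => ZMod (p i ^ e i)) with hDdef
  haveI : Finite D := Finite.of_equiv _ DFinsupp.equivFunOnFintype.symm
  have hF : ∀ x : F, IsOfFinAddOrder x → x = 0 := by
    intro x hx
    obtain ⟨m, hm, hmx⟩ := isOfFinAddOrder_iff_nsmul_eq_zero.mp hx
    ext i
    have h2 := DFunLike.congr_fun hmx i
    rw [Finsupp.smul_apply, Finsupp.zero_apply, nsmul_eq_mul] at h2
    exact (mul_eq_zero.mp h2).resolve_left (by exact_mod_cast hm.ne')
  have hD : ∀ d : D, IsOfFinAddOrder d := fun d => isOfFinAddOrder_of_finite d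
  -- cardinality of homs out of F
  have hcF : Nat.card (F →+ G) = Nat.card G ^ n := by
    have e1 : (F →+ G) ≃ (Fin n → G) :=
      Finsupp.liftAddHom.toEquiv.symm.trans
        (Equiv.piCongrRight fun _ => (zmultiplesHom G).symm)
    rw [Nat.card_congr e1, Nat.card_fun, Nat.card_eq_fintype_card (α := Fin n), Fintype.card_fin]
  -- finrank of Q
  haveI : Module.Finite ℤ Q := Module.Finite.iff_addGroup_fg.mpr ‹_›
  haveI : Module.Finite ℤ (F × D) := Module.Finite.equiv f.toIntLinearEquiv
  have hDcardpos : (0 : ℤ) < Nat.card D := by exact_mod_cast Nat.card_pos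
  have hrk : Module.finrank ℤ Q = n := by
    rw [f.toIntLinearEquiv.finrank_eq]
    have h1 := Submodule.finrank_quotient_add_finrank (R := ℤ)
      (LinearMap.ker (LinearMap.fst ℤ F D))
    have h2 : Module.finrank ℤ ((F × D) ⧸ LinearMap.ker (LinearMap.fst ℤ F D))
        = Module.finrank ℤ F :=
      (LinearMap.quotKerEquivOfSurjective _ (Prod.fst_surjective)).finrank_eq
    have h3 : Module.finrank ℤ (LinearMap.ker (LinearMap.fst ℤ F D)) = 0 := by
      refine (Module.finrank_eq_zero_iff (R := ℤ) (M := LinearMap.ker (LinearMap.fst ℤ F D))).mpr ?_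
      rintro ⟨⟨x, d⟩, hx⟩
      refine ⟨(Nat.card D : ℤ), hDcardpos.ne', ?_⟩
      have hx0 : x = 0 := hx
      refine Subtype.ext (Prod.ext ?_ ?_)
      · simp [hx0]
      · show (Nat.card D : ℤ) • d = 0
        rw [natCast_zsmul]
        exact card_nsmul_eq_zero'
    rw [h2, h3, add_zero] at h1
    rw [← h1, Module.finrank_finsupp_self, Fintype.card_fin]
  rw [hrk]
  have tQ : AddCommGroup.torsion Q ≃+ D := (torsionCongr f).trans (torsionProdEquiv hF hD)
  rw [Nat.card_congr (homCongrLeft tQ)]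
  rw [Nat.card_congr (homCongrLeft f), Nat.card_congr (prodHomEquiv F D G), Nat.card_prod, hcF,
    mul_comm]

end Counting

section Main
open Module

variable {Γ G : Type*} [AddCommGroup Γ] [AddGroup.FG Γ] [AddCommGroup G] [Finite G]

lemma finrank_quot_closure (X : Set Γ) :
    Module.finrank ℤ (Γ ⧸ AddSubgroup.closure X) = Module.finrank ℤ Γ - rk Γ X := by
  haveI : Module.Finite ℤ Γ := Module.Finite.iff_addGroup_fg.mpr ‹_›
  set N : Submodule ℤ Γ := Submodule.span ℤ X with hN
  have hNH : N.toAddSubgroup = AddSubgroup.closure X :=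
    Submodule.span_int_eq_addSubgroupClosure X
  have e2 : (Γ ⧸ AddSubgroup.closure X) ≃+ (Γ ⧸ N) :=
    QuotientAddGroup.quotientAddEquivOfEq hNH.symm
  rw [finrank_int_congr _ (Submodule.Quotient.module N) e2]
  rw [Submodule.finrank_quotient]
  congr 1
  show Module.finrank ℤ N = Module.finrank ℤ (AddSubgroup.closure X)
  exact finrank_int_congr _ _ (AddEquiv.addSubgroupCongr hNH)

lemma key_count (X : Set Γ) :
    Nat.card {φ : Γ →+ G // ∀ x ∈ X, φ x = 0} =
      mult Γ G X * Nat.card G ^ (Module.finrank ℤ Γ - rk Γ X) := by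
  set H := AddSubgroup.closure X with hH
  have e1 : {φ : Γ →+ G // ∀ x ∈ X, φ x = 0} ≃ ((Γ ⧸ H) →+ G) := by
    refine (Equiv.subtypeEquivRight fun φ => ?_).trans (quotHomEquiv H).symm
    constructor
    · intro hX x hx
      exact (AddSubgroup.closure_le φ.ker).mpr (fun y hy => hX y hy) hx
    · intro hHφ x hx
      exact hHφ x (AddSubgroup.subset_closure hx)
  rw [Nat.card_congr e1, card_hom_eq, finrank_quot_closure]
  rfl

lemma finite_hom (Q : Type*) [AddCommGroup Q] [AddGroup.FG Q] : Finite (Q →+ G) := by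
  obtain ⟨n, ι, fι, p, hp, e, ⟨f⟩⟩ := AddCommGroup.equiv_free_prod_directSum_zmod Q
  haveI : ∀ i, NeZero (p i ^ e i) := fun i => ⟨pow_ne_zero _ (hp i).ne_zero⟩
  haveI : Finite (DirectSum ι fun i => ZMod (p i ^ e i)) :=
    Finite.of_equiv _ DFinsupp.equivFunOnFintype.symm
  haveI : Finite ((DirectSum ι fun i => ZMod (p i ^ e i)) →+ G) :=
    Finite.of_injective _ DFunLike.coe_injective
  haveI : Finite ((Fin n →₀ ℤ) →+ G) :=
    Finite.of_equiv _ (Finsupp.liftAddHom.toEquiv.symm.trans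
      (Equiv.piCongrRight fun _ => (zmultiplesHom G).symm)).symm
  exact Finite.of_equiv _ ((homCongrLeft f).trans (prodHomEquiv _ _ G)).symm

end Main


/-- Point counting: for a finite abelian group `G`,
`#M(𝒜; Γ, G) = χ_𝒜^G(#G) = Σ_{𝒮⊆𝒜} (-1)^{#𝒮} m(𝒮;G) (#G)^{r_Γ - r_𝒮}`. -/
theorem card_complement_eq_char (Γ G : Type*) {ι : Type*} [AddCommGroup Γ] [AddGroup.FG Γ]
    [AddCommGroup G] [Finite G] (A : Finset ι) (a : ι → Γ) :
    (Nat.card {φ : Γ →+ G // ∀ i ∈ A, φ (a i) ≠ 0} : ℤ) =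
      ∑ S ∈ A.powerset, (-1 : ℤ) ^ S.card * (mult Γ G (a '' (S : Set ι)) : ℤ) *
        (Nat.card G : ℤ) ^ (Module.finrank ℤ Γ - rk Γ (a '' (S : Set ι))) := by
  classical
  haveI : Finite (Γ →+ G) := finite_hom Γ
  haveI : Fintype (Γ →+ G) := Fintype.ofFinite _
  have key : ∀ S : Finset ι, (Nat.card {φ : Γ →+ G // ∀ i ∈ S, φ (a i) = 0} : ℤ)
      = (mult Γ G (a '' (S : Set ι)) : ℤ) *
        (Nat.card G : ℤ) ^ (Module.finrank ℤ Γ - rk Γ (a '' (S : Set ι))) := by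
    intro S
    have e := Equiv.subtypeEquivRight (p := fun φ : Γ →+ G => ∀ i ∈ S, φ (a i) = 0)
      (q := fun φ : Γ →+ G => ∀ x ∈ a '' (S : Set ι), φ x = 0) (fun φ => by
        simp [Set.forall_mem_image])
    rw [Nat.card_congr e, key_count]
    push_cast
    ring
  have hfilter : ∀ φ : Γ →+ G,
      (A.powerset.filter fun S => ∀ i ∈ S, φ (a i) = 0)
        = (A.filter fun i => φ (a i) = 0).powerset := by
    intro φ
    ext S
    simp only [Finset.mem_filter, Finset.mem_powerset, Finset.subset_iff, Finset.mem_filter]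
    constructor
    · rintro ⟨h1, h2⟩ x hx
      exact ⟨h1 hx, h2 x hx⟩
    · intro h
      exact ⟨fun x hx => (h hx).1, fun x hx => (h hx).2⟩
  calc (Nat.card {φ : Γ →+ G // ∀ i ∈ A, φ (a i) ≠ 0} : ℤ)
      = ((Finset.univ.filter fun φ : Γ →+ G => ∀ i ∈ A, φ (a i) ≠ 0).card : ℤ) := by
        rw [Nat.card_eq_fintype_card, Fintype.card_subtype]
    _ = ∑ φ : Γ →+ G, if ∀ i ∈ A, φ (a i) ≠ 0 then (1:ℤ) else 0 := by
        rw [Finset.sum_boole]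
    _ = ∑ φ : Γ →+ G, ∑ S ∈ (A.filter fun i => φ (a i) = 0).powerset, (-1:ℤ)^S.card := by
        refine Finset.sum_congr rfl fun φ _ => ?_
        rw [Finset.sum_powerset_neg_one_pow_card]
        refine (if_congr ?_ rfl rfl).symm
        rw [Finset.filter_eq_empty_iff]
    _ = ∑ φ : Γ →+ G, ∑ S ∈ A.powerset, if ∀ i ∈ S, φ (a i) = 0 then (-1:ℤ)^S.card else 0 := by
        refine Finset.sum_congr rfl fun φ _ => ?_
        rw [← hfilter φ, Finset.sum_filter]
    _ = ∑ S ∈ A.powerset, ∑ φ : Γ →+ G, if ∀ i ∈ S, φ (a i) = 0 then (-1:ℤ)^S.card else 0 :=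
        Finset.sum_comm
    _ = ∑ S ∈ A.powerset,
          (-1:ℤ)^S.card * (Nat.card {φ : Γ →+ G // ∀ i ∈ S, φ (a i) = 0} : ℤ) := by
        refine Finset.sum_congr rfl fun S _ => ?_
        rw [← Finset.sum_filter, Finset.sum_const, Nat.card_eq_fintype_card,
          Fintype.card_subtype, nsmul_eq_mul, mul_comm]
    _ = ∑ S ∈ A.powerset, (-1 : ℤ) ^ S.card * (mult Γ G (a '' (S : Set ι)) : ℤ) *
        (Nat.card G : ℤ) ^ (Module.finrank ℤ Γ - rk Γ (a '' (S : Set ι))) :=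
        Finset.sum_congr rfl fun S _ => by rw [key S]; ring
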